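/- (Convexity of the achievable bit-wise UEP region) Fix ℓ ≥ 1. Call a pair of vectors (R⃗, E⃗) ∈ ℝ_{≥0}^{ℓ} × ℝ_{≥0}^{ℓ} admissible if there exists β⃗ ∈ ℝ_{≥0}^{ℓ} with Σ_j β_j ≤ 1 such that R_i ≤ C·β_i for all i, and E_i ≤ (1 − Σ_{j=1}^{ℓ} β_j)·D + Σ_{j=i+1}^{ℓ} β_j·J(R_j/β_j) for all i (with the convention β_j·J(R_j/β_j) = 0 if R_j = β_j = 0). Then the set of admissible pairs (R⃗, E⃗) is convex. -/

import Mathlib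

open scoped BigOperators

lemma persp_key (J : ℝ → ℝ) (hJconc : ConcaveOn ℝ (Set.Ici 0) J)
    (a b β β' R R' : ℝ) (ha : 0 ≤ a) (hb : 0 ≤ b) (hab : a + b = 1)
    (hβ : 0 ≤ β) (hβ' : 0 ≤ β') (hR : 0 ≤ R) (hR' : 0 ≤ R')
    (hRβ : β = 0 → R = 0) (hR'β' : β' = 0 → R' = 0) :
    a * (if β = 0 then 0 else β * J (R / β)) +
      b * (if β' = 0 then 0 else β' * J (R' / β')) ≤
    (if a * β + b * β' = 0 then 0
      else (a * β + b * β') * J ((a * R + b * R') / (a * β + b * β'))) := by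
  rcases eq_or_lt_of_le hβ with h0 | h0
  · have hβ0 : β = 0 := h0.symm
    have hR0 : R = 0 := hRβ hβ0
    subst hβ0; subst hR0
    rcases eq_or_lt_of_le hβ' with h0' | h0'
    · have hβ'0 : β' = 0 := h0'.symm
      subst hβ'0; simp
    · rcases eq_or_lt_of_le hb with hb0 | hb0
      · have hb0' : b = 0 := hb0.symm
        subst hb0'; simp
      · have hne : a * 0 + b * β' ≠ 0 := by positivity
        rw [if_pos rfl, if_neg hne, if_neg h0'.ne']
        have harg : (a * 0 + b * R') / (a * 0 + b * β') = R' / β' := by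
          rw [mul_zero, zero_add, zero_add, mul_div_mul_left _ _ (ne_of_gt hb0)]
        rw [harg]
        have : a * 0 + b * (β' * J (R' / β')) = (a * 0 + b * β') * J (R' / β') := by ring
        linarith [this.le]
  · rcases eq_or_lt_of_le hβ' with h0' | h0'
    · have hβ'0 : β' = 0 := h0'.symm
      have hR'0 : R' = 0 := hR'β' hβ'0
      subst hβ'0; subst hR'0
      rcases eq_or_lt_of_le ha with ha0 | ha0
      · have ha0' : a = 0 := ha0.symm
        subst ha0'; simp
      · have hne : a * β + b * 0 ≠ 0 := by positivity
        rw [if_pos rfl, if_neg hne, if_neg h0.ne']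
        have harg : (a * R + b * 0) / (a * β + b * 0) = R / β := by
          rw [mul_zero, add_zero, add_zero, mul_div_mul_left _ _ (ne_of_gt ha0)]
        rw [harg]
        have : a * (β * J (R / β)) + b * 0 = (a * β + b * 0) * J (R / β) := by ring
        linarith [this.le]
    · have hs : 0 < a * β + b * β' := by
        rcases eq_or_lt_of_le ha with ha0 | ha0
        · have hb1 : b = 1 := by linarith
          have : a = 0 := ha0.symm
          rw [this, hb1]; simpa using h0'
        · positivity
      rw [if_neg h0.ne', if_neg h0'.ne', if_neg hs.ne']
      set s := a * β + b * β' with hsdef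
      have hw1 : 0 ≤ a * β / s := by positivity
      have hw2 : 0 ≤ b * β' / s := by positivity
      have hwsum : a * β / s + b * β' / s = 1 := by field_simp; exact hsdef.symm
      have hconc := hJconc.2 (Set.mem_Ici.2 (by positivity : (0:ℝ) ≤ R / β))
        (Set.mem_Ici.2 (by positivity : (0:ℝ) ≤ R' / β')) hw1 hw2 hwsum
      have harg : a * β / s * (R / β) + b * β' / s * (R' / β') = (a * R + b * R') / s := by
        field_simp
      simp only [smul_eq_mul] at hconc; rw [harg] at hconc
      have h2 := mul_le_mul_of_nonneg_left hconc (le_of_lt hs)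
      calc a * (β * J (R / β)) + b * (β' * J (R' / β'))
          = s * (a * β / s * J (R / β) + b * β' / s * J (R' / β')) := by
            field_simp
        _ ≤ s * J ((a * R + b * R') / s) := h2

/-- Convexity of the achievable bit-wise UEP region: for fixed `ℓ`, a rate-vector /
exponent-vector pair `(R⃗, E⃗)` of nonnegative vectors is admissible if there exists a
time-sharing vector `β⃗ ≥ 0` with `Σ_j β_j ≤ 1`, `R_i ≤ C β_i` for all `i`, and
`E_i ≤ (1 − Σ_j β_j) D + Σ_{j>i} β_j J(R_j/β_j)` for all `i` (with the convention
`β_j J(R_j/β_j) = 0` when `β_j = 0`). The set of admissible pairs is convex. -/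
theorem admissible_region_convex (ℓ : ℕ) (C D : ℝ) (hC : 0 < C) (hD : 0 < D)
    (J : ℝ → ℝ)
    (hJconc : ConcaveOn ℝ (Set.Ici 0) J)
    (hJanti : Antitone J)
    (hJle : ∀ R, J R ≤ D) :
    Convex ℝ {p : (Fin ℓ → ℝ) × (Fin ℓ → ℝ) |
      (∀ i, 0 ≤ p.1 i) ∧ (∀ i, 0 ≤ p.2 i) ∧
      ∃ β : Fin ℓ → ℝ, (∀ i, 0 ≤ β i) ∧ (∑ j, β j) ≤ 1 ∧
        (∀ i, p.1 i ≤ C * β i) ∧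
        (∀ i, p.2 i ≤ (1 - ∑ j, β j) * D +
          ∑ j ∈ Finset.univ.filter (fun j : Fin ℓ => (i : ℕ) < (j : ℕ)),
            (if β j = 0 then 0 else β j * J (p.1 j / β j)))} := by
  rintro ⟨R, E⟩ ⟨hR0, hE0, β, hβ0, hβs, hRβ, hEβ⟩ ⟨R', E'⟩ ⟨hR'0, hE'0, β', hβ'0, hβ's, hR'β', hE'β'⟩
    a b ha hb hab
  simp only [Set.mem_setOf_eq, Prod.fst, Prod.snd] at *
  have hx : a • ((R, E) : (Fin ℓ → ℝ) × (Fin ℓ → ℝ)) + b • (R', E')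
      = (fun i => a * R i + b * R' i, fun i => a * E i + b * E' i) := by
    ext i <;> simp [Prod.smul_def]
  rw [hx]
  refine ⟨fun i => add_nonneg (mul_nonneg ha (hR0 i)) (mul_nonneg hb (hR'0 i)),
    fun i => add_nonneg (mul_nonneg ha (hE0 i)) (mul_nonneg hb (hE'0 i)),
    fun i => a * β i + b * β' i,
    fun i => add_nonneg (mul_nonneg ha (hβ0 i)) (mul_nonneg hb (hβ'0 i)), ?_, ?_, ?_⟩
  · have : ∑ j, (a * β j + b * β' j) = a * ∑ j, β j + b * ∑ j, β' j := by
      rw [Finset.sum_add_distrib, Finset.mul_sum, Finset.mul_sum]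
    rw [this]
    calc a * ∑ j, β j + b * ∑ j, β' j ≤ a * 1 + b * 1 := by
          gcongr
      _ = 1 := by linarith
  · intro i
    have h1 := hRβ i
    have h2 := hR'β' i
    show a * R i + b * R' i ≤ C * (a * β i + b * β' i)
    nlinarith
  · intro i
    show a * E i + b * E' i ≤ (1 - ∑ j, (a * β j + b * β' j)) * D +
      ∑ j ∈ Finset.univ.filter (fun j : Fin ℓ => (i : ℕ) < (j : ℕ)),
        (if a * β j + b * β' j = 0 then 0
          else (a * β j + b * β' j) * J ((a * R j + b * R' j) / (a * β j + b * β' j)))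
    have hzero : ∀ j, β j = 0 → R j = 0 := fun j hj =>
      le_antisymm (by simpa [hj] using hRβ j) (hR0 j)
    have hzero' : ∀ j, β' j = 0 → R' j = 0 := fun j hj =>
      le_antisymm (by simpa [hj] using hR'β' j) (hR'0 j)
    have key : ∀ j ∈ Finset.univ.filter (fun j : Fin ℓ => (i : ℕ) < (j : ℕ)),
        a * (if β j = 0 then 0 else β j * J (R j / β j)) +
          b * (if β' j = 0 then 0 else β' j * J (R' j / β' j)) ≤
        (if a * β j + b * β' j = 0 then 0
          else (a * β j + b * β' j) * J ((a * R j + b * R' j) / (a * β j + b * β' j))) :=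
      fun j _ => persp_key J hJconc a b (β j) (β' j) (R j) (R' j) ha hb hab
        (hβ0 j) (hβ'0 j) (hR0 j) (hR'0 j) (hzero j) (hzero' j)
    have hsum := Finset.sum_le_sum key
    have hS : ∑ j, (a * β j + b * β' j) = a * ∑ j, β j + b * ∑ j, β' j := by
      rw [Finset.sum_add_distrib, Finset.mul_sum, Finset.mul_sum]
    have hEi := hEβ i
    have hE'i := hE'β' i
    have hcomb : a * E i + b * E' i ≤
        (1 - ∑ j, (a * β j + b * β' j)) * D +
        ∑ j ∈ Finset.univ.filter (fun j : Fin ℓ => (i : ℕ) < (j : ℕ)),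
          (a * (if β j = 0 then 0 else β j * J (R j / β j)) +
            b * (if β' j = 0 then 0 else β' j * J (R' j / β' j))) := by
      rw [hS, Finset.sum_add_distrib, ← Finset.mul_sum, ← Finset.mul_sum]
      nlinarith [mul_le_mul_of_nonneg_left hEi ha, mul_le_mul_of_nonneg_left hE'i hb]
    exact hcomb.trans (by linarith [hsum])
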